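/- For all n ≥ 1, the parity-constrained Hanoi graph P^n is connected; moreover it is 2-connected (removal of any single vertex leaves it connected, and it has at least 3 vertices). -/

import Mathlib

/-- Parity constraint on a state: disc `d+1` (labelled `1,…,n`) may not sit on
peg `2` if it is even, nor on peg `1` if it is odd. -/
def pegOK (n : ℕ) (s : Fin n → Fin 4) : Prop :=
  ∀ d : Fin n, (Even ((d : ℕ) + 1) → s d ≠ 2) ∧ (Odd ((d : ℕ) + 1) → s d ≠ 1)

instance (n : ℕ) : DecidablePred (pegOK n) := fun s => by
  unfold pegOK; infer_instance

/-- Vertices of the parity-constrained Hanoi graph `P^n`. -/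
abbrev PVertex (n : ℕ) := {s : Fin n → Fin 4 // pegOK n s}

/-- The parity-constrained four-peg Hanoi graph `P^n`: two states are adjacent iff
they differ in exactly one coordinate `d` (a legal move of disc `d+1`) and no
smaller disc sits on either of the two pegs involved. -/
def PGraph (n : ℕ) : SimpleGraph (PVertex n) where
  Adj s t := ∃ d : Fin n,
    s.1 d ≠ t.1 d ∧ (∀ k, k ≠ d → s.1 k = t.1 k) ∧
    (∀ k, k < d → s.1 k ≠ s.1 d ∧ s.1 k ≠ t.1 d)
  symm := by
    constructor
    rintro s t ⟨d, hne, heq, hlt⟩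
    refine ⟨d, hne.symm, fun k hk => (heq k hk).symm, fun k hk => ?_⟩
    have h := hlt k hk
    rw [← heq k (ne_of_lt hk)]
    exact ⟨h.2, h.1⟩
  loopless := by constructor; rintro s ⟨d, hne, -⟩; exact hne rfl

instance (n : ℕ) : DecidableRel (PGraph n).Adj := fun s t =>
  decidable_of_iff (∃ d : Fin n,
    s.1 d ≠ t.1 d ∧ (∀ k, k ≠ d → s.1 k = t.1 k) ∧
    (∀ k, k < d → s.1 k ≠ s.1 d ∧ s.1 k ≠ t.1 d)) Iff.rfl

/-! ### auxiliary definitions -/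

/-- the value `a` is allowed for disc index `k` -/
def okVal (k : ℕ) (a : Fin 4) : Prop := (Even (k + 1) → a ≠ 2) ∧ (Odd (k + 1) → a ≠ 1)

lemma pegOK_iff {n : ℕ} (s : Fin n → Fin 4) : pegOK n s ↔ ∀ d : Fin n, okVal d (s d) := Iff.rfl

lemma okVal_of_ne (k : ℕ) (a : Fin 4) (h1 : a ≠ 1) (h2 : a ≠ 2) : okVal k a :=
  ⟨fun _ => h2, fun _ => h1⟩

/-- the parity peg of disc index `k` -/
def ppeg (k : ℕ) : Fin 4 := if Even (k + 1) then 1 else 2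

lemma ppeg_ne_zero (k : ℕ) : ppeg k ≠ 0 := by unfold ppeg; split <;> decide
lemma ppeg_ne_three (k : ℕ) : ppeg k ≠ 3 := by unfold ppeg; split <;> decide

lemma okVal_ppeg (k : ℕ) : okVal k (ppeg k) := by
  unfold okVal ppeg
  by_cases h : Even (k + 1)
  · simp only [if_pos h]
    exact ⟨fun _ => by decide, fun ho => absurd h (Nat.not_even_iff_odd.mpr ho).elim⟩
  · simp only [if_neg h]
    exact ⟨fun he => absurd he h, fun _ => by decide⟩

lemma okVal_cases {k : ℕ} {a : Fin 4} (h : okVal k a) : a = 0 ∨ a = ppeg k ∨ a = 3 := by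
  unfold okVal at h; unfold ppeg
  by_cases he : Even (k + 1)
  · have := h.1 he; simp [he]; fin_cases a <;> simp_all
  · have := h.2 (Nat.not_even_iff_odd.mp he); simp [he]; fin_cases a <;> simp_all

def constV (n : ℕ) (c : Fin 4) (h1 : c ≠ 1) (h2 : c ≠ 2) : PVertex n :=
  ⟨fun _ => c, fun _ => okVal_of_ne _ _ h1 h2⟩

def parV (n : ℕ) : PVertex n := ⟨fun k => ppeg k, fun k => okVal_ppeg k⟩

def snocV {n : ℕ} (u : PVertex n) (a : Fin 4) (ha : okVal n a) : PVertex (n + 1) :=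
  ⟨Fin.snoc u.1 a, by
    intro d
    rcases eq_or_ne d (Fin.last n) with rfl | hd
    · simpa [Fin.snoc_last, okVal] using ha
    · obtain ⟨k, rfl⟩ := Fin.exists_castSucc_eq.mpr hd
      simpa [Fin.snoc_castSucc] using u.2 k⟩

lemma snocV_last {n : ℕ} (u : PVertex n) (a : Fin 4) (ha : okVal n a) :
    (snocV u a ha).1 (Fin.last n) = a := by simp [snocV]

lemma snocV_castSucc {n : ℕ} (u : PVertex n) (a : Fin 4) (ha : okVal n a) (k : Fin n) :
    (snocV u a ha).1 k.castSucc = u.1 k := by simp [snocV]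

def initV {n : ℕ} (u : PVertex (n + 1)) : PVertex n :=
  ⟨Fin.init u.1, fun k => by simpa [Fin.init] using u.2 k.castSucc⟩

lemma okVal_last {n : ℕ} (u : PVertex (n + 1)) : okVal n (u.1 (Fin.last n)) := by
  simpa [okVal] using u.2 (Fin.last n)

lemma snoc_initV {n : ℕ} (u : PVertex (n + 1)) :
    snocV (initV u) (u.1 (Fin.last n)) (okVal_last u) = u := by
  apply Subtype.ext
  exact Fin.snoc_init_self u.1

/-! ### adjacency lemmas -/

lemma adj_snoc {n : ℕ} {u w : PVertex n} {a : Fin 4} {ha ha' : okVal n a}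
    (h : (PGraph n).Adj u w) :
    (PGraph (n + 1)).Adj (snocV u a ha) (snocV w a ha') := by
  obtain ⟨d, h1, h2, h3⟩ := h
  refine ⟨d.castSucc, ?_, ?_, ?_⟩
  · simpa [snocV_castSucc] using h1
  · intro k hk
    rcases eq_or_ne k (Fin.last n) with rfl | hkl
    · simp [snocV_last]
    · obtain ⟨k', rfl⟩ := Fin.exists_castSucc_eq.mpr hkl
      rw [snocV_castSucc, snocV_castSucc]
      exact h2 k' (fun hc => hk (by rw [hc]))
  · intro k hk
    have hkl : k ≠ Fin.last n := ne_of_lt (lt_of_lt_of_le hk d.castSucc.le_last)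
    obtain ⟨k', rfl⟩ := Fin.exists_castSucc_eq.mpr hkl
    rw [snocV_castSucc, snocV_castSucc, snocV_castSucc]
    exact h3 k' (by exact_mod_cast hk)

lemma adj_big {n : ℕ} (u : PVertex n) {a b : Fin 4} (ha : okVal n a) (hb : okVal n b)
    (hne : a ≠ b) (h : ∀ k : Fin n, u.1 k ≠ a ∧ u.1 k ≠ b) :
    (PGraph (n + 1)).Adj (snocV u a ha) (snocV u b hb) := by
  refine ⟨Fin.last n, by simpa [snocV_last] using hne, ?_, ?_⟩
  · intro k hk
    obtain ⟨k', rfl⟩ := Fin.exists_castSucc_eq.mpr hk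
    rw [snocV_castSucc, snocV_castSucc]
  · intro k hk
    obtain ⟨k', rfl⟩ := Fin.exists_castSucc_eq.mpr (ne_of_lt hk)
    rw [snocV_castSucc, snocV_last, snocV_last]
    exact h k'

/-- the hom embedding the copy with largest disc on peg `a` -/
def snocHom {n : ℕ} (a : Fin 4) (ha : okVal n a) : PGraph n →g PGraph (n + 1) where
  toFun u := snocV u a ha
  map_rel' := adj_snoc

lemma reach_snoc {n : ℕ} {u w : PVertex n} {a : Fin 4} (ha : okVal n a)
    (h : (PGraph n).Reachable u w) :
    (PGraph (n + 1)).Reachable (snocV u a ha) (snocV w a ha) :=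
  h.map (snocHom a ha)

lemma okVal03 {k : ℕ} {c : Fin 4} (h : c = 0 ∨ c = 3) : okVal k c := by
  rcases h with rfl | rfl <;> exact okVal_of_ne _ _ (by decide) (by decide)

/-- connectivity of `PGraph n` -/
lemma pconn : ∀ n : ℕ, (PGraph n).Connected := by
  intro n
  induction n with
  | zero =>
    rw [SimpleGraph.connected_iff]
    refine ⟨fun u w => ?_, ⟨⟨fun k => k.elim0, fun k => k.elim0⟩⟩⟩
    have : u = w := Subtype.ext (funext fun k => k.elim0)
    rw [this]
  | succ n ih =>
    have key : ∀ u : PVertex (n + 1),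
        (PGraph (n + 1)).Reachable u (snocV (constV n 0 (by decide) (by decide)) 0
          (okVal03 (Or.inl rfl))) := by
      intro u
      have hu : u = snocV (initV u) (u.1 (Fin.last n)) (okVal_last u) := (snoc_initV u).symm
      rcases okVal_cases (okVal_last u) with h0 | hp | h3
      · rw [hu]
        have := reach_snoc (okVal_last u) (ih.preconnected (initV u)
          (constV n 0 (by decide) (by decide)))
        refine this.trans ?_
        have : snocV (constV n 0 (by decide) (by decide)) (u.1 (Fin.last n)) (okVal_last u)
            = snocV (constV n 0 (by decide) (by decide)) 0 (okVal03 (Or.inl rfl)) := by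
          apply Subtype.ext; simp only [snocV]; rw [h0]
        rw [this]
      · -- parity peg : route via all-3 tower
        rw [hu]
        have r1 := reach_snoc (okVal_last u) (ih.preconnected (initV u)
          (constV n 3 (by decide) (by decide)))
        have e : (PGraph (n+1)).Adj
            (snocV (constV n 3 (by decide) (by decide)) (u.1 (Fin.last n)) (okVal_last u))
            (snocV (constV n 3 (by decide) (by decide)) 0 (okVal03 (Or.inl rfl))) := by
          apply adj_big
          · rw [hp]; exact ppeg_ne_zero n
          · intro k
            refine ⟨?_, ?_⟩
            · show (3 : Fin 4) ≠ u.1 (Fin.last n); rw [hp]; exact (ppeg_ne_three n).symm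
            · show (3 : Fin 4) ≠ 0; decide
        have r2 := reach_snoc (okVal03 (Or.inl rfl))
          (ih.preconnected (constV n 3 (by decide) (by decide))
            (constV n 0 (by decide) (by decide)))
        exact (r1.trans e.reachable).trans r2
      · -- disc on 3 : route via parity tower
        rw [hu]
        have r1 := reach_snoc (okVal_last u) (ih.preconnected (initV u) (parV n))
        have e : (PGraph (n+1)).Adj (snocV (parV n) (u.1 (Fin.last n)) (okVal_last u))
            (snocV (parV n) 0 (okVal03 (Or.inl rfl))) := by
          apply adj_big
          · rw [h3]; decide
          · intro k
            refine ⟨?_, ppeg_ne_zero k⟩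
            show ppeg k ≠ u.1 (Fin.last n); rw [h3]; exact ppeg_ne_three k
        have r2 := reach_snoc (okVal03 (Or.inl rfl))
          (ih.preconnected (parV n) (constV n 0 (by decide) (by decide)))
        exact (r1.trans e.reachable).trans r2
    rw [SimpleGraph.connected_iff]
    exact ⟨fun u w => (key u).trans (key w).symm, ⟨snocV (constV n 0 (by decide) (by decide)) 0 (okVal03 (Or.inl rfl))⟩⟩

/-! ### lemmas about snocV / initV -/

lemma initV_snocV {n : ℕ} (u : PVertex n) (a : Fin 4) (ha : okVal n a) :
    initV (snocV u a ha) = u := by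
  apply Subtype.ext
  funext k
  simp [initV, snocV]

lemma snocV_congr {n : ℕ} {u w : PVertex n} {a b : Fin 4} {ha : okVal n a} {hb : okVal n b}
    (h1 : u = w) (h2 : a = b) : snocV u a ha = snocV w b hb := by
  subst h1; subst h2; rfl

lemma snocV_inj {n : ℕ} {u w : PVertex n} {a : Fin 4} {ha hb : okVal n a}
    (h : snocV u a ha = snocV w a hb) : u = w := by
  have := congrArg initV h
  rwa [initV_snocV, initV_snocV] at this

lemma snocV_eq_iff {n : ℕ} {u : PVertex n} {a : Fin 4} {ha : okVal n a} {v : PVertex (n + 1)}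
    (h : snocV u a ha = v) : u = initV v ∧ a = v.1 (Fin.last n) := by
  constructor
  · rw [← h, initV_snocV]
  · rw [← h, snocV_last]

/-- reachability inside one copy, avoiding the deleted vertex `v` -/
lemma reach_copy_del {n : ℕ} (v : PVertex (n + 1))
    (ih2 : ∀ w : PVertex n, ((PGraph n).induce {u : PVertex n | u ≠ w}).Connected)
    {x y : PVertex (n + 1)} (hx : x ≠ v) (hy : y ≠ v)
    (hxy : x.1 (Fin.last n) = y.1 (Fin.last n)) :
    ((PGraph (n + 1)).induce {u : PVertex (n + 1) | u ≠ v}).Reachable ⟨x, hx⟩ ⟨y, hy⟩ := by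
  set a := x.1 (Fin.last n) with hadef
  have hav : okVal n a := hadef ▸ okVal_last x
  by_cases hc : a = v.1 (Fin.last n)
  · -- x, y live in the copy of v : use 2-connectivity downstairs
    have hxv : initV x ≠ initV v := by
      intro h
      apply hx
      rw [← snoc_initV x, ← snoc_initV v]
      exact snocV_congr h (hadef.symm.trans hc)
    have hyv : initV y ≠ initV v := by
      intro h
      apply hy
      rw [← snoc_initV y, ← snoc_initV v]
      exact snocV_congr h (hxy.symm.trans (hadef.symm.trans hc))
    let f : (PGraph n).induce {u : PVertex n | u ≠ initV v} →g
        (PGraph (n + 1)).induce {u : PVertex (n + 1) | u ≠ v} :=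
      { toFun := fun u => ⟨snocV u.1 a hav, fun h => u.2 (snocV_eq_iff h).1⟩
        map_rel' := fun h => adj_snoc (ha := hav) (ha' := hav) h }
    have r := ((ih2 (initV v)).preconnected ⟨initV x, hxv⟩ ⟨initV y, hyv⟩).map f
    have ex : f ⟨initV x, hxv⟩ = ⟨x, hx⟩ := by
      apply Subtype.ext
      show snocV (initV x) a hav = x
      conv_rhs => rw [← snoc_initV x]
    have ey : f ⟨initV y, hyv⟩ = ⟨y, hy⟩ := by
      apply Subtype.ext
      show snocV (initV y) a hav = y
      conv_rhs => rw [← snoc_initV y]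
      exact snocV_congr rfl (hadef.trans hxy)
    rwa [ex, ey] at r
  · -- the whole copy avoids v
    let f : PGraph n →g (PGraph (n + 1)).induce {u : PVertex (n + 1) | u ≠ v} :=
      { toFun := fun u => ⟨snocV u a hav, fun h => hc (snocV_eq_iff h).2⟩
        map_rel' := fun h => adj_snoc (ha := hav) (ha' := hav) h }
    have r := ((pconn n).preconnected (initV x) (initV y)).map f
    have ex : f (initV x) = ⟨x, hx⟩ := by
      apply Subtype.ext
      show snocV (initV x) a hav = x
      conv_rhs => rw [← snoc_initV x]
    have ey : f (initV y) = ⟨y, hy⟩ := by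
      apply Subtype.ext
      show snocV (initV y) a hav = y
      conv_rhs => rw [← snoc_initV y]
      exact snocV_congr rfl (hadef.trans hxy)
    rwa [ex, ey] at r

/-- a big-disc move between pegs `a` and `b` avoiding the deleted vertex `v` -/
lemma cross_edge {n : ℕ} (v : PVertex (n + 1)) {a b : Fin 4} (M1 M2 : PVertex n)
    (hM : M1 ≠ M2) (ha : okVal n a) (hb : okVal n b) (hab : a ≠ b)
    (h1 : ∀ k, M1.1 k ≠ a ∧ M1.1 k ≠ b) (h2 : ∀ k, M2.1 k ≠ a ∧ M2.1 k ≠ b) :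
    ∃ e f : PVertex (n + 1), e ≠ v ∧ f ≠ v ∧ e.1 (Fin.last n) = a ∧
      f.1 (Fin.last n) = b ∧ (PGraph (n + 1)).Adj e f := by
  by_cases hE : snocV M1 a ha = v
  · refine ⟨snocV M2 a ha, snocV M2 b hb, ?_, ?_, snocV_last _ _ _, snocV_last _ _ _,
      adj_big M2 ha hb hab h2⟩
    · intro h; exact hM (snocV_inj (h.trans hE.symm)).symm
    · intro h; exact hab ((snocV_eq_iff hE).2.trans (snocV_eq_iff h).2.symm)
  · by_cases hF : snocV M1 b hb = v
    · refine ⟨snocV M2 a ha, snocV M2 b hb, ?_, ?_, snocV_last _ _ _, snocV_last _ _ _,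
        adj_big M2 ha hb hab h2⟩
      · intro h; exact hab ((snocV_eq_iff h).2.trans (snocV_eq_iff hF).2.symm)
      · intro h; exact hM (snocV_inj (h.trans hF.symm)).symm
    · exact ⟨snocV M1 a ha, snocV M1 b hb, hE, hF, snocV_last _ _ _, snocV_last _ _ _,
        adj_big M1 ha hb hab h1⟩

/-! ### the two crossing configurations -/

lemma Ms (n : ℕ) (hn : 1 ≤ n) {x : Fin 4} (hx : x = 0 ∨ x = 3) :
    ∃ M1 M2 : PVertex n, M1 ≠ M2 ∧ (∀ k, M1.1 k ≠ x ∧ M1.1 k ≠ ppeg n) ∧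
      (∀ k, M2.1 k ≠ x ∧ M2.1 k ≠ ppeg n) := by
  obtain ⟨j, w, hjn, hw, hw0, hw3, hwp⟩ :
      ∃ (j : ℕ) (w : Fin 4), j < n ∧ okVal j w ∧ w ≠ 0 ∧ w ≠ 3 ∧ w ≠ ppeg n := by
    by_cases hE : Even (n + 1)
    · refine ⟨0, 2, hn, ⟨fun h => absurd h (by decide), fun _ => by decide⟩, by decide,
        by decide, ?_⟩
      simp only [ppeg, if_pos hE]; decide
    · have hn2 : 2 ≤ n := by
        have he : Even n := by
          rcases Nat.even_or_odd n with h | h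
          · exact h
          · exact absurd h.add_one hE
        obtain ⟨m, hm⟩ := he; omega
      refine ⟨1, 1, hn2, ⟨fun _ => by decide, fun h => absurd h (by decide)⟩, by decide,
        by decide, ?_⟩
      simp only [ppeg, if_neg hE]; decide
  obtain ⟨x', hx', hx'x⟩ : ∃ x' : Fin 4, (x' = 0 ∨ x' = 3) ∧ x' ≠ x := by
    rcases hx with rfl | rfl
    · exact ⟨3, Or.inr rfl, by decide⟩
    · exact ⟨0, Or.inl rfl, by decide⟩
  have hx'1 : x' ≠ 1 := by rcases hx' with rfl | rfl <;> decide
  have hx'2 : x' ≠ 2 := by rcases hx' with rfl | rfl <;> decide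
  refine ⟨constV n x' hx'1 hx'2,
    ⟨fun k => if (k : ℕ) = j then w else x', ?_⟩, ?_, ?_, ?_⟩
  · intro d
    by_cases hd : (d : ℕ) = j
    · simp only [hd, eq_self_iff_true, if_true]
      exact hw
    · simp only [if_neg hd]
      exact okVal03 hx'
  · intro h
    have := congrFun (congrArg Subtype.val h) ⟨j, hjn⟩
    simp only [constV, Fin.val_mk, eq_self_iff_true, if_true] at this
    rcases hx' with rfl | rfl
    · exact hw0 this.symm
    · exact hw3 this.symm
  · intro k
    refine ⟨hx'x, ?_⟩
    show x' ≠ ppeg n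
    rcases hx' with rfl | rfl
    · exact fun h => ppeg_ne_zero n h.symm
    · exact fun h => ppeg_ne_three n h.symm
  · intro k
    show (if (k : ℕ) = j then w else x') ≠ x ∧ (if (k : ℕ) = j then w else x') ≠ ppeg n
    by_cases hk : (k : ℕ) = j
    · rw [if_pos hk]
      refine ⟨?_, hwp⟩
      rcases hx with rfl | rfl
      · exact hw0
      · exact hw3
    · rw [if_neg hk]
      refine ⟨hx'x, ?_⟩
      rcases hx' with rfl | rfl
      · exact fun h => ppeg_ne_zero n h.symm
      · exact fun h => ppeg_ne_three n h.symm

/-! ### base case n = 1 -/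

lemma adj_one {s t : PVertex 1} (h : s ≠ t) : (PGraph 1).Adj s t := by
  refine ⟨0, ?_, ?_, ?_⟩
  · intro h0
    apply h
    apply Subtype.ext
    funext k
    rw [Subsingleton.elim k 0]
    exact h0
  · intro k hk
    exact absurd (Subsingleton.elim k 0) hk
  · intro k hk
    exact absurd hk (by rw [Subsingleton.elim k 0]; exact lt_irrefl _)

lemma p2_one (v : PVertex 1) : ((PGraph 1).induce {u : PVertex 1 | u ≠ v}).Connected := by
  rw [SimpleGraph.connected_iff]
  constructor
  · intro x y
    rcases eq_or_ne x y with rfl | hxy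
    · exact SimpleGraph.Reachable.refl _
    · refine SimpleGraph.Adj.reachable ?_
      show (PGraph 1).Adj x.1 y.1
      exact adj_one (fun h => hxy (Subtype.ext h))
  · by_cases h : v = constV 1 0 (by decide) (by decide)
    · refine ⟨⟨constV 1 3 (by decide) (by decide), ?_⟩⟩
      intro hc
      rw [h] at hc
      have := congrFun (congrArg Subtype.val hc) 0
      exact absurd this (by decide)
    · exact ⟨⟨constV 1 0 (by decide) (by decide), fun hc => h hc.symm⟩⟩

/-! ### 2-connectivity -/

lemma p2 : ∀ n : ℕ, 1 ≤ n → ∀ v : PVertex n,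
    ((PGraph n).induce {u : PVertex n | u ≠ v}).Connected := by
  intro n hn
  induction n, hn using Nat.le_induction with
  | base => exact p2_one
  | succ n hn ih =>
    intro v
    -- crossing edge between copies 0 and ppeg n
    obtain ⟨M1, M2, hM, hA1, hA2⟩ := Ms n hn (Or.inl rfl)
    obtain ⟨e0, f0, he0, hf0, he0l, hf0l, hadj0⟩ :=
      cross_edge v M1 M2 hM (okVal03 (Or.inl rfl)) (okVal_ppeg n) (ppeg_ne_zero n).symm hA1 hA2
    -- crossing edge between copies 3 and ppeg n
    obtain ⟨N1, N2, hN, hB1, hB2⟩ := Ms n hn (Or.inr rfl)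
    obtain ⟨e3, f3, he3, hf3, he3l, hf3l, hadj3⟩ :=
      cross_edge v N1 N2 hN (okVal03 (Or.inr rfl)) (okVal_ppeg n) (ppeg_ne_three n).symm hB1 hB2
    have key : ∀ (x : PVertex (n + 1)) (hx : x ≠ v),
        ((PGraph (n + 1)).induce {u : PVertex (n + 1) | u ≠ v}).Reachable ⟨x, hx⟩ ⟨f0, hf0⟩ := by
      intro x hx
      have edge0 : ((PGraph (n + 1)).induce {u : PVertex (n + 1) | u ≠ v}).Adj
          ⟨e0, he0⟩ ⟨f0, hf0⟩ := hadj0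
      have edge3 : ((PGraph (n + 1)).induce {u : PVertex (n + 1) | u ≠ v}).Adj
          ⟨e3, he3⟩ ⟨f3, hf3⟩ := hadj3
      rcases okVal_cases (okVal_last x) with h0 | hp | h3
      · exact (reach_copy_del v ih hx he0 (h0.trans he0l.symm)).trans edge0.reachable
      · exact reach_copy_del v ih hx hf0 (hp.trans hf0l.symm)
      · exact ((reach_copy_del v ih hx he3 (h3.trans he3l.symm)).trans edge3.reachable).trans
          (reach_copy_del v ih hf3 hf0 (hf3l.trans hf0l.symm))
    rw [SimpleGraph.connected_iff]
    exact ⟨fun x y => (key x.1 x.2).trans (key y.1 y.2).symm, ⟨⟨f0, hf0⟩⟩⟩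

/-! ### at least three vertices -/

lemma ppeg_zero : ppeg 0 = 2 := by decide

lemma card3 (n : ℕ) (hn : 1 ≤ n) : 3 ≤ Fintype.card (PVertex n) := by
  have h0 : (0 : ℕ) < n := hn
  let i0 : Fin n := ⟨0, h0⟩
  let f : Fin 3 → PVertex n :=
    ![constV n 0 (by decide) (by decide), constV n 3 (by decide) (by decide), parV n]
  have hval : ∀ i : Fin 3, (f i).1 i0 = ![0, 3, 2] i := by
    intro i
    fin_cases i
    · rfl
    · rfl
    · show ppeg (i0 : ℕ) = 2
      show ppeg 0 = 2
      exact ppeg_zero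
  have hf : Function.Injective f := by
    intro i j h
    have := (hval i).symm.trans ((congrFun (congrArg Subtype.val h) i0).trans (hval j))
    fin_cases i <;> fin_cases j <;> first | rfl | (exact absurd this (by decide))
  calc 3 = Fintype.card (Fin 3) := (Fintype.card_fin 3).symm
    _ ≤ Fintype.card (PVertex n) := Fintype.card_le_of_injective f hf


/-- For `n ≥ 1`, the graph `P^n` is connected, and in fact `2`-connected: it has
at least `3` vertices and remains connected after deleting any single vertex. -/
theorem stmt12 : ∀ n : ℕ, 1 ≤ n →
    (PGraph n).Connected ∧ 3 ≤ Fintype.card (PVertex n) ∧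
    ∀ v : PVertex n, ((PGraph n).induce {u : PVertex n | u ≠ v}).Connected := by
  intro n hn
  exact ⟨pconn n, card3 n hn, p2 n hn⟩
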